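/- Let m ∈ (0,1). Then for every x ∈ [0, π/2], sin²x − mx ≤ max( 0, (1 + √(1 − m²) − m(π − arcsin m))/2 ). -/

import Mathlib

open Real

/-- Maximization computation of Appendix G: for `m ∈ (0,1)` and
`x ∈ [0, π/2]`, `sin²x − mx ≤ max(0, (1 + √(1−m²) − m(π − arcsin m))/2)`. -/
theorem stmt_18 (m : ℝ) (hm : m ∈ Set.Ioo (0:ℝ) 1) :
    ∀ x ∈ Set.Icc (0:ℝ) (π / 2),
      Real.sin x ^ 2 - m * x
        ≤ max 0 ((1 + Real.sqrt (1 - m ^ 2) - m * (π - Real.arcsin m)) / 2) := by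
  obtain ⟨hm0, hm1⟩ := hm
  set s := Real.arcsin m with hsdef
  have hm1' : -1 ≤ m := by linarith
  have hm1'' : m ≤ 1 := le_of_lt hm1
  have hs0 : 0 < s := Real.arcsin_pos.2 hm0
  have hs2 : s < π / 2 := Real.arcsin_lt_pi_div_two.2 hm1
  have hsins : Real.sin s = m := Real.sin_arcsin hm1' hm1''
  have hpi : (0:ℝ) < π := Real.pi_pos
  set g : ℝ → ℝ := fun x => Real.sin x ^ 2 - m * x with hgdef
  have hderiv : ∀ x, HasDerivAt g (Real.sin (2 * x) - m) x := by
    intro x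
    have h1 : HasDerivAt (fun y => Real.sin y ^ 2) (2 * Real.sin x ^ 1 * Real.cos x) x :=
      (Real.hasDerivAt_sin x).pow 2
    have h2 : HasDerivAt (fun y => m * y) (m * 1) x := (hasDerivAt_id x).const_mul m
    have h3 : HasDerivAt g (2 * Real.sin x ^ 1 * Real.cos x - m * 1) x := h1.sub h2
    convert h3 using 1
    rw [Real.sin_two_mul]; ring
  have hderiv' : ∀ x, deriv g x = Real.sin (2 * x) - m := fun x => (hderiv x).deriv
  have hcont : Continuous g := (Real.continuous_sin.pow 2).sub (continuous_const.mul continuous_id)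
  have hmemIcc : ∀ t : ℝ, -(π/2) ≤ t → t ≤ π/2 → t ∈ Set.Icc (-(π/2)) (π/2) :=
    fun t h1 h2 => ⟨h1, h2⟩
  have hsmem : s ∈ Set.Icc (-(π/2)) (π/2) := ⟨by linarith, le_of_lt hs2⟩
  -- value at the critical point b = (π - s)/2
  have hvb : g ((π - s) / 2) = (1 + Real.sqrt (1 - m ^ 2) - m * (π - s)) / 2 := by
    have hsq : Real.sin ((π - s) / 2) ^ 2 = 1 / 2 - Real.cos (2 * ((π - s) / 2)) / 2 :=
      Real.sin_sq_eq_half_sub _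
    have h2b : 2 * ((π - s) / 2) = π - s := by ring
    show Real.sin ((π - s) / 2) ^ 2 - m * ((π - s) / 2) = _
    rw [hsq, h2b, Real.cos_pi_sub, hsdef, Real.cos_arcsin]
    ring
  -- antitone on [0, s/2]
  have hanti1 : AntitoneOn g (Set.Icc 0 (s / 2)) := by
    apply antitoneOn_of_deriv_nonpos (convex_Icc _ _) hcont.continuousOn
        (fun x _ => (hderiv x).differentiableAt.differentiableWithinAt)
    · intro x hx
      rw [interior_Icc] at hx
      rw [hderiv' x]
      have hx2 : 2 * x ∈ Set.Icc (-(π/2)) (π/2) :=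
        ⟨by nlinarith [hx.1], by nlinarith [hx.2]⟩
      have : Real.sin (2 * x) ≤ Real.sin s :=
        Real.strictMonoOn_sin.monotoneOn hx2 hsmem (by nlinarith [hx.2])
      linarith [this, hsins.symm ▸ this]
  -- monotone on [s/2, (π-s)/2]
  have hmono : MonotoneOn g (Set.Icc (s / 2) ((π - s) / 2)) := by
    apply monotoneOn_of_deriv_nonneg (convex_Icc _ _) hcont.continuousOn
        (fun x _ => (hderiv x).differentiableAt.differentiableWithinAt)
    · intro x hx
      rw [interior_Icc] at hx
      rw [hderiv' x]
      have key : m ≤ Real.sin (2 * x) := by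
        rcases le_or_gt (2 * x) (π / 2) with h | h
        · have hx2 : 2 * x ∈ Set.Icc (-(π/2)) (π/2) := ⟨by nlinarith [hx.1], h⟩
          have := Real.strictMonoOn_sin.monotoneOn hsmem hx2 (by nlinarith [hx.1])
          rwa [hsins] at this
        · rw [← Real.sin_pi_sub]
          have hx2 : π - 2 * x ∈ Set.Icc (-(π/2)) (π/2) :=
            ⟨by nlinarith [hx.2, hs0, hpi], by nlinarith [h]⟩
          have := Real.strictMonoOn_sin.monotoneOn hsmem hx2 (by nlinarith [hx.2])
          rwa [hsins] at this
      linarith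
  -- antitone on [(π-s)/2, π/2]
  have hanti2 : AntitoneOn g (Set.Icc ((π - s) / 2) (π / 2)) := by
    apply antitoneOn_of_deriv_nonpos (convex_Icc _ _) hcont.continuousOn
        (fun x _ => (hderiv x).differentiableAt.differentiableWithinAt)
    · intro x hx
      rw [interior_Icc] at hx
      rw [hderiv' x]
      have key : Real.sin (2 * x) ≤ m := by
        rw [← Real.sin_pi_sub]
        have hx2 : π - 2 * x ∈ Set.Icc (-(π/2)) (π/2) :=
          ⟨by nlinarith [hx.2], by nlinarith [hx.1, hs2]⟩
        have := Real.strictMonoOn_sin.monotoneOn hx2 hsmem (by nlinarith [hx.1])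
        rwa [hsins] at this
      linarith
  have hg0 : g 0 = 0 := by simp [hgdef]
  intro x hx
  obtain ⟨hx0, hx2⟩ := hx
  show g x ≤ _
  rcases le_or_gt x (s / 2) with h1 | h1
  · have := hanti1 ⟨le_refl 0, by linarith⟩ ⟨hx0, h1⟩ hx0
    rw [hg0] at this
    exact this.trans (le_max_left _ _)
  · rcases le_or_gt x ((π - s) / 2) with h2 | h2
    · have := hmono ⟨le_of_lt h1, h2⟩ ⟨by linarith, le_refl _⟩ h2
      rw [hvb] at this
      exact this.trans (le_max_right _ _)
    · have := hanti2 ⟨le_refl _, by linarith⟩ ⟨le_of_lt h2, hx2⟩ (le_of_lt h2)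
      rw [hvb] at this
      exact this.trans (le_max_right _ _)
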